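/- Fix an integer t ≥ 2. In the polynomial ring K[E_t], the colon ideal ( ⟨ a_i b_j : 1 ≤ j < i ≤ t ⟩ + ⟨ a_i a_j f_1 f_3 e_2 : 1 ≤ j < i ≤ t ⟩ ) : ⟨ a_t² f_1 f_3 e_2 ⟩ equals the ideal ⟨ b_1, …, b_{t−1}, a_1, …, a_{t−1} ⟩ generated by those 2t − 2 variables. -/

import Mathlib

open MvPolynomial

noncomputable section

namespace ToricPaper

variable (K : Type) [Field K]

/-- The Hilbert function of `R/I`: dimension of the degree `j` part. -/
def hilb {σ : Type} (I : Ideal (MvPolynomial σ K)) (j : ℕ) : ℕ :=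
  Module.finrank K (Submodule.map (Ideal.Quotient.mkₐ K I).toLinearMap
    (homogeneousSubmodule σ K j))

/-- The Hilbert series of `R/I` as a power series over `ℤ`. -/
def hilbertSeries {σ : Type} (I : Ideal (MvPolynomial σ K)) : PowerSeries ℤ :=
  PowerSeries.mk fun j => (hilb K I j : ℤ)

/-- `h` is the `h`-polynomial of `R/I`: `h(1) ≠ 0` and
`HS_{R/I}(x) = h(x)/(1-x)^{dim R/I}`. -/
def IsHPolynomial {σ : Type} (I : Ideal (MvPolynomial σ K)) (h : Polynomial ℤ) : Prop :=
  Polynomial.eval 1 h ≠ 0 ∧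
  ∃ d : ℕ, ringKrullDim (MvPolynomial σ K ⧸ I) = d ∧
    (h : PowerSeries ℤ) = hilbertSeries K I * (1 - PowerSeries.X) ^ d

/-- A homogeneous ideal: all homogeneous components of its elements belong to it. -/
def IsHomogeneousIdeal {σ : Type} (I : Ideal (MvPolynomial σ K)) : Prop :=
  ∀ f ∈ I, ∀ n : ℕ, homogeneousComponent n f ∈ I

/-- The module of `i`-chains of the Koszul complex of the variables with
coefficients in `R/I`. -/
abbrev KChain {σ : Type} (I : Ideal (MvPolynomial σ K)) (i : ℕ) : Type :=
  {S : Finset σ // S.card = i} → (MvPolynomial σ K ⧸ I)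

/-- The Koszul differential. -/
def kd {σ : Type} [Finite σ] (I : Ideal (MvPolynomial σ K)) (i : ℕ)
    (f : KChain K I i) : KChain K I (i - 1) :=
  letI := Fintype.ofFinite σ
  letI := Classical.decEq σ
  letI : LinearOrder σ := IsWellOrder.linearOrder WellOrderingRel
  fun T =>
    if hi : 1 ≤ i then
      ∑ x : σ,
        if hx : x ∈ T.1 then 0
        else ((-1 : ℤ) ^ (T.1.filter (fun y => y < x)).card) •
          (Ideal.Quotient.mk I (X x) *
            f ⟨insert x T.1, by rw [Finset.card_insert_of_notMem hx, T.2]; omega⟩)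
    else 0

/-- The internal degree `j` part of the `i`-chains of the Koszul complex:
each Koszul basis element `e_S`, `|S| = i`, has degree `i`, so coefficients
lie in the degree `j - i` part of `R/I`. -/
def degPart {σ : Type} (I : Ideal (MvPolynomial σ K)) (i j : ℕ) :
    Set (KChain K I i) :=
  {f | (∀ T, f T ∈ Submodule.map (Ideal.Quotient.mkₐ K I).toLinearMap
          (homogeneousSubmodule σ K (j - i))) ∧ (i ≤ j ∨ f = 0)}

/-- Degree `j` Koszul cycles in homological degree `i`. -/
def cyclesSet {σ : Type} [Finite σ] (I : Ideal (MvPolynomial σ K)) (i j : ℕ) :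
    Set (KChain K I i) :=
  degPart K I i j ∩ {f | kd K I i f = 0}

/-- Degree `j` Koszul boundaries in homological degree `i`. -/
def boundariesSet {σ : Type} [Finite σ] (I : Ideal (MvPolynomial σ K)) (i j : ℕ) :
    Set (KChain K I i) :=
  kd K I (i + 1) '' (degPart K I (i + 1) j)

/-- The graded Betti numbers `β_{i,j}(R/I) = dim_K Tor_i(R/I, K)_j`, computed
as the dimension of the degree `j` part of the `i`-th homology of the Koszul
complex of the variables with coefficients in `R/I`. -/
def betti {σ : Type} [Finite σ] (I : Ideal (MvPolynomial σ K)) (i j : ℕ) : ℕ :=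
  Module.finrank K
    ((Submodule.span K (cyclesSet K I i j)) ⧸
      (Submodule.comap (Submodule.span K (cyclesSet K I i j)).subtype
        (Submodule.span K (boundariesSet K I i j))))

/-- Castelnuovo-Mumford regularity: `max { j - i | β_{i,j}(R/I) ≠ 0 }`. -/
def regularity {σ : Type} [Finite σ] (I : Ideal (MvPolynomial σ K)) : ℕ :=
  sSup {r | ∃ i j, betti K I i j ≠ 0 ∧ j = i + r}

/-- Projective dimension: `max { i | β_{i,j}(R/I) ≠ 0 for some j }`. -/
def pdim {σ : Type} [Finite σ] (I : Ideal (MvPolynomial σ K)) : ℕ :=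
  sSup {p | ∃ j, betti K I p j ≠ 0}

/-- `β_{a,b}(R/I)` is an extremal graded Betti number. -/
def IsExtremalBetti {σ : Type} [Finite σ] (I : Ideal (MvPolynomial σ K))
    (a b : ℕ) : Prop :=
  betti K I a b ≠ 0 ∧
  ∀ i j : ℕ, a ≤ i → b < j → ((b : ℤ) - a ≤ (j : ℤ) - i) → betti K I i j = 0

/-- The depth of `R/I`: the maximal length of a regular sequence on `R/I`
consisting of elements of the irrelevant maximal ideal `⟨x_1, …, x_n⟩`. -/
def depth {σ : Type} (I : Ideal (MvPolynomial σ K)) : ℕ :=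
  sSup {n | ∃ rs : List (MvPolynomial σ K), rs.length = n ∧
    (∀ x ∈ rs, x ∈ Ideal.span (Set.range (X : σ → MvPolynomial σ K))) ∧
    RingTheory.Sequence.IsRegular (MvPolynomial σ K ⧸ I) rs}

/-- The initial ideal of `I` with respect to a monomial order: the ideal
generated by the leading monomials of the nonzero elements of `I`. -/
def initialIdeal {σ : Type} (m : MonomialOrder σ) (I : Ideal (MvPolynomial σ K)) :
    Ideal (MvPolynomial σ K) :=
  Ideal.span {g | ∃ f ∈ I, f ≠ 0 ∧ ∃ u ∈ f.support,
    (∀ v ∈ f.support, m.toSyn v ≤ m.toSyn u) ∧ g = monomial u 1}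

/-- The toric ideal of a finite simple graph `G`: the kernel of the map
`K[E] → K[V]` sending the variable of an edge `{u,v}` to `uv`. -/
def toricIdeal {V : Type} (G : SimpleGraph V) : Ideal (MvPolynomial G.edgeSet K) :=
  RingHom.ker (MvPolynomial.aeval (R := K)
    (fun e : G.edgeSet =>
      Sym2.lift ⟨fun u v => (X u : MvPolynomial V K) * X v,
        fun _ _ => mul_comm _ _⟩ (e : Sym2 V))).toRingHom



/-! ### The graph `G_t` and its edge ring -/

/-- Edge variables of the graph `G_t`:
`a i = {x₁, y i}`, `f j` the triangle at `x₂`, `e j` the triangle at `x₁`,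
`b i = {x₂, y i}`. -/
abbrev EVar (t : ℕ) : Type := (Fin t ⊕ Fin 3) ⊕ (Fin 3 ⊕ Fin t)

/-- The edge `a i = {x₁, y i}` of `G_t`. -/
def EVar.a {t : ℕ} (i : Fin t) : EVar t := Sum.inl (Sum.inl i)
/-- The edges `f 0 = f₁ = {x₂,w₁}`, `f 1 = f₂ = {w₁,w₂}`, `f 2 = f₃ = {w₂,x₂}`. -/
def EVar.f {t : ℕ} (j : Fin 3) : EVar t := Sum.inl (Sum.inr j)
/-- The edges `e 0 = e₁ = {x₁,z₁}`, `e 1 = e₂ = {z₁,z₂}`, `e 2 = e₃ = {z₂,x₁}`. -/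
def EVar.e {t : ℕ} (j : Fin 3) : EVar t := Sum.inr (Sum.inl j)
/-- The edge `b i = {x₂, y i}` of `G_t`. -/
def EVar.b {t : ℕ} (i : Fin t) : EVar t := Sum.inr (Sum.inr i)

/-- Vertices of `G_t`: `inl 0 = x₁`, `inl 1 = x₂`, `inl 2 = z₁`, `inl 3 = z₂`,
`inl 4 = w₁`, `inl 5 = w₂`, and `inr i = y i`. -/
abbrev GtVertex (t : ℕ) : Type := Fin 6 ⊕ Fin t

/-- The map sending each edge variable of `G_t` to the product of the
variables of its two endpoints. -/
def gtMap (t : ℕ) : EVar t → MvPolynomial (GtVertex t) K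
  | Sum.inl (Sum.inl i) => X (Sum.inl 0) * X (Sum.inr i)
  | Sum.inl (Sum.inr j) =>
      ![X (Sum.inl 1) * X (Sum.inl 4), X (Sum.inl 4) * X (Sum.inl 5),
        X (Sum.inl 5) * X (Sum.inl 1)] j
  | Sum.inr (Sum.inl j) =>
      ![X (Sum.inl 0) * X (Sum.inl 2), X (Sum.inl 2) * X (Sum.inl 3),
        X (Sum.inl 3) * X (Sum.inl 0)] j
  | Sum.inr (Sum.inr i) => X (Sum.inl 1) * X (Sum.inr i)

/-- The toric ideal `I_{G_t} ⊆ K[E_t]`. -/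
def toricGt (t : ℕ) : Ideal (MvPolynomial (EVar t) K) :=
  RingHom.ker (MvPolynomial.aeval (R := K) (gtMap K t)).toRingHom

/-- The rank of a variable in the order
`a₁ > ⋯ > a_t > f₁ > f₂ > f₃ > e₁ > e₂ > e₃ > b₁ > ⋯ > b_t`
(smaller rank = larger variable). -/
def evarRank (t : ℕ) : EVar t → ℕ
  | Sum.inl (Sum.inl i) => (i : ℕ)
  | Sum.inl (Sum.inr j) => t + (j : ℕ)
  | Sum.inr (Sum.inl j) => t + 3 + (j : ℕ)
  | Sum.inr (Sum.inr i) => t + 6 + (i : ℕ)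

/-- The graded reverse lexicographic comparison of exponent vectors for the
variable order `a₁ > ⋯ > a_t > f₁ > f₂ > f₃ > e₁ > e₂ > e₃ > b₁ > ⋯ > b_t`:
`u ≤ v` iff `deg u < deg v`, or the degrees agree and either `u = v` or
`u x > v x` at the smallest variable `x` (i.e. largest rank) where `u` and `v`
differ. -/
def grevlexLe (t : ℕ) (u v : EVar t →₀ ℕ) : Prop :=
  (u.sum fun _ n => n) < (v.sum fun _ n => n) ∨
  ((u.sum fun _ n => n) = (v.sum fun _ n => n) ∧
    (u = v ∨ ∃ x, v x < u x ∧ ∀ y, evarRank t x < evarRank t y → u y = v y))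

/-- `m` is the graded reverse lexicographic monomial order with
`a₁ > ⋯ > a_t > f₁ > f₂ > f₃ > e₁ > e₂ > e₃ > b₁ > ⋯ > b_t`. -/
def IsGrevlex (t : ℕ) (m : MonomialOrder (EVar t)) : Prop :=
  ∀ u v : EVar t →₀ ℕ, (m.toSyn u ≤ m.toSyn v) ↔ grevlexLe t u v

/-- The binomials `a_i b_j - a_j b_i`, `1 ≤ i < j ≤ t`. -/
def G1Set (t : ℕ) : Set (MvPolynomial (EVar t) K) :=
  {g | ∃ i j : Fin t, i < j ∧
    g = X (EVar.a i) * X (EVar.b j) - X (EVar.a j) * X (EVar.b i)}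

/-- The binomials `a_i a_j f₁ f₃ e₂ - f₂ e₁ e₃ b_i b_j`, `1 ≤ i < j ≤ t`. -/
def G2Set (t : ℕ) : Set (MvPolynomial (EVar t) K) :=
  {g | ∃ i j : Fin t, i < j ∧
    g = X (EVar.a i) * X (EVar.a j) * X (EVar.f 0) * X (EVar.f 2) * X (EVar.e 1)
      - X (EVar.f 1) * X (EVar.e 0) * X (EVar.e 2) * X (EVar.b i) * X (EVar.b j)}

/-- The binomials `a_i² f₁ f₃ e₂ - f₂ e₁ e₃ b_i²`, `1 ≤ i ≤ t`. -/
def G3Set (t : ℕ) : Set (MvPolynomial (EVar t) K) :=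
  {g | ∃ i : Fin t,
    g = X (EVar.a i) ^ 2 * X (EVar.f 0) * X (EVar.f 2) * X (EVar.e 1)
      - X (EVar.f 1) * X (EVar.e 0) * X (EVar.e 2) * X (EVar.b i) ^ 2}

/-- The monomials `a_i b_j`, `1 ≤ j < i ≤ t`. -/
def M1Set (t : ℕ) : Set (MvPolynomial (EVar t) K) :=
  {g | ∃ i j : Fin t, j < i ∧ g = X (EVar.a i) * X (EVar.b j)}

/-- The monomials `a_i a_j f₁ f₃ e₂`, `1 ≤ i < j ≤ t`. -/
def M2Set (t : ℕ) : Set (MvPolynomial (EVar t) K) :=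
  {g | ∃ i j : Fin t, i < j ∧
    g = X (EVar.a i) * X (EVar.a j) * X (EVar.f 0) * X (EVar.f 2) * X (EVar.e 1)}

/-- The monomials `a_i² f₁ f₃ e₂`, `1 ≤ i ≤ t`. -/
def M3Set (t : ℕ) : Set (MvPolynomial (EVar t) K) :=
  {g | ∃ i : Fin t,
    g = X (EVar.a i) ^ 2 * X (EVar.f 0) * X (EVar.f 2) * X (EVar.e 1)}


/-- Substitution killing `a_j` and `b_j` for `j < t-1`. -/
def kl (K : Type) [Field K] (t : ℕ) : EVar t → MvPolynomial (EVar t) K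
  | Sum.inl (Sum.inl i) => if (i : ℕ) < t - 1 then 0 else X (Sum.inl (Sum.inl i))
  | Sum.inl (Sum.inr j) => X (Sum.inl (Sum.inr j))
  | Sum.inr (Sum.inl j) => X (Sum.inr (Sum.inl j))
  | Sum.inr (Sum.inr i) => if (i : ℕ) < t - 1 then 0 else X (Sum.inr (Sum.inr i))

lemma sub_aeval_kl_mem (K : Type) [Field K] (t : ℕ) (p : MvPolynomial (EVar t) K) :
    p - aeval (kl K t) p ∈ Ideal.span {g : MvPolynomial (EVar t) K | ∃ j : Fin t,
      (j : ℕ) < t - 1 ∧ (g = X (EVar.b j) ∨ g = X (EVar.a j))} := by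
  set J := Ideal.span {g : MvPolynomial (EVar t) K | ∃ j : Fin t,
      (j : ℕ) < t - 1 ∧ (g = X (EVar.b j) ∨ g = X (EVar.a j))} with hJ
  induction p using MvPolynomial.induction_on with
  | C a => simp [aeval_C, algebraMap_eq]
  | add p q hp hq =>
      have : p + q - aeval (kl K t) (p + q) = (p - aeval (kl K t) p) + (q - aeval (kl K t) q) := by
        rw [map_add]; ring
      rw [this]; exact add_mem hp hq
  | mul_X p x hp =>
      have hx : X x - kl K t x ∈ J := by
        match x with
        | Sum.inl (Sum.inl i) =>
            by_cases h : (i : ℕ) < t - 1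
            · simp only [kl, if_pos h, sub_zero]
              exact Ideal.subset_span ⟨i, h, Or.inr rfl⟩
            · simp [kl, if_neg h]
        | Sum.inl (Sum.inr j) => simp [kl]
        | Sum.inr (Sum.inl j) => simp [kl]
        | Sum.inr (Sum.inr i) =>
            by_cases h : (i : ℕ) < t - 1
            · simp only [kl, if_pos h, sub_zero]
              exact Ideal.subset_span ⟨i, h, Or.inl rfl⟩
            · simp [kl, if_neg h]
      have : p * X x - aeval (kl K t) (p * X x)
          = (p - aeval (kl K t) p) * X x + aeval (kl K t) p * (X x - kl K t x) := by
        rw [map_mul, aeval_X]; ring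
      rw [this]
      exact add_mem (Ideal.mul_mem_right _ _ hp) (Ideal.mul_mem_left _ _ hx)

/-- from the proof of Theorem 3.7, Case 2. For `t ≥ 2`, in
`K[E_t]` one has
`(⟨a_i b_j : j < i⟩ + ⟨a_i a_j f₁ f₃ e₂ : j < i⟩) : ⟨a_t² f₁ f₃ e₂⟩
  = ⟨b₁, …, b_{t-1}, a₁, …, a_{t-1}⟩`. -/
theorem statement11 (K : Type) [Field K] (t : ℕ) (ht : 2 ≤ t) :
    Submodule.colon (Ideal.span (M1Set K t) + Ideal.span (M2Set K t))
      ((Ideal.span {X (EVar.a (⟨t - 1, by omega⟩ : Fin t)) ^ 2 *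
        X (EVar.f 0) * X (EVar.f 2) * X (EVar.e 1)} : Ideal (MvPolynomial (EVar t) K)) :
        Set (MvPolynomial (EVar t) K))
    = Ideal.span {g : MvPolynomial (EVar t) K | ∃ j : Fin t, (j : ℕ) < t - 1 ∧
        (g = X (EVar.b j) ∨ g = X (EVar.a j))} := by
  set I := Ideal.span (M1Set K t) + Ideal.span (M2Set K t) with hI
  set m : MvPolynomial (EVar t) K := X (EVar.a (⟨t - 1, by omega⟩ : Fin t)) ^ 2 *
        X (EVar.f 0) * X (EVar.f 2) * X (EVar.e 1) with hm
  have htop : (⟨t - 1, by omega⟩ : Fin t) = ⟨t - 1, by omega⟩ := rfl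
  ext r
  rw [Ideal.mem_colon_span_singleton]
  constructor
  · intro hrm
    -- r * m ∈ I; apply the substitution φ = aeval (kl K t)
    have hker : I ≤ RingHom.ker (aeval (kl K t) : MvPolynomial (EVar t) K →ₐ[K]
        MvPolynomial (EVar t) K).toRingHom := by
      rw [hI]
      apply sup_le <;> rw [Ideal.span_le] <;> rintro g hg
      · obtain ⟨i, j, hij, rfl⟩ := hg
        have hj : (j : ℕ) < t - 1 := by
          have := i.isLt; have := (Fin.lt_def.mp hij); omega
        simp [RingHom.mem_ker, EVar.a, EVar.b, kl, hj]
      · obtain ⟨i, j, hij, rfl⟩ := hg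
        have hi : (i : ℕ) < t - 1 := by
          have := j.isLt; have := (Fin.lt_def.mp hij); omega
        simp [RingHom.mem_ker, EVar.a, EVar.b, kl, hi]
    have h0 : aeval (kl K t) (r * m) = 0 := hker hrm
    have hmm : aeval (kl K t) m = m := by
      have : ¬ ((t - 1 : ℕ) < t - 1) := lt_irrefl _
      simp [hm, EVar.a, EVar.f, EVar.e, kl, this]
    rw [map_mul, hmm] at h0
    have hmne : m ≠ 0 := by
      rw [hm]
      refine mul_ne_zero (mul_ne_zero (mul_ne_zero (pow_ne_zero _ (X_ne_zero _))
        (X_ne_zero _)) (X_ne_zero _)) (X_ne_zero _)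
    have hr0 : aeval (kl K t) r = 0 := by
      rcases mul_eq_zero.mp h0 with h | h
      · exact h
      · exact absurd h hmne
    have := sub_aeval_kl_mem K t r
    rwa [hr0, sub_zero] at this
  · intro hr
    -- each generator times m lies in I
    have hgen : ∀ g ∈ {g : MvPolynomial (EVar t) K | ∃ j : Fin t, (j : ℕ) < t - 1 ∧
        (g = X (EVar.b j) ∨ g = X (EVar.a j))}, g * m ∈ I := by
      rintro g ⟨j, hj, hg | hg⟩
      · have h1 : X (EVar.a (⟨t - 1, by omega⟩ : Fin t)) * X (EVar.b j) ∈ M1Set K t :=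
          ⟨⟨t - 1, by omega⟩, j, Fin.lt_def.mpr (by simpa using hj), rfl⟩
        have : g * m = (X (EVar.a (⟨t - 1, by omega⟩ : Fin t)) * X (EVar.f 0) *
            X (EVar.f 2) * X (EVar.e 1)) *
            (X (EVar.a (⟨t - 1, by omega⟩ : Fin t)) * X (EVar.b j)) := by
          rw [hg, hm]; ring
        rw [this]
        exact Ideal.mem_sup_left (Ideal.mul_mem_left _ _ (Ideal.subset_span h1))
      · have h1 : X (EVar.a j) * X (EVar.a (⟨t - 1, by omega⟩ : Fin t)) * X (EVar.f 0) *
            X (EVar.f 2) * X (EVar.e 1) ∈ M2Set K t :=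
          ⟨j, ⟨t - 1, by omega⟩, Fin.lt_def.mpr (by simpa using hj), rfl⟩
        have : g * m = X (EVar.a (⟨t - 1, by omega⟩ : Fin t)) *
            (X (EVar.a j) * X (EVar.a (⟨t - 1, by omega⟩ : Fin t)) * X (EVar.f 0) *
            X (EVar.f 2) * X (EVar.e 1)) := by
          rw [hg, hm]; ring
        rw [this]
        exact Ideal.mem_sup_right (Ideal.mul_mem_left _ _ (Ideal.subset_span h1))
    -- extend to all of the span
    refine Submodule.span_induction (p := fun r _ => r * m ∈ I) ?_ ?_ ?_ ?_ hr
    · exact hgen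
    · simp
    · intro x y _ _ hx hy; rw [add_mul]; exact add_mem hx hy
    · intro c x _ hx; rw [smul_mul_assoc]; exact Submodule.smul_mem _ _ hx

end ToricPaper
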